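/- Under the hypotheses of Lemma 1 and additionally assuming each f_n has a finite minimum f_n* and step sizes satisfy 0 < η_k < 1/(2LK) with each f_n also L-smooth, the following holds: -∑_k 2η_k(1 - 2LKη_k) ∑_n γ_n (f_n(w_k) - f_n(w*)) ≤ ∑_k 2η_k(1 - 2LKη_k)(LKη_k - 1) ∑_n γ_n (f_n(w) - f_n(w*)) + ∑_k 2LKη_k² ∑_n γ_n (f_n(w*) - f_n*) + ∑_k (1/K - μη_k) ‖w_k - w‖². -/

import Mathlib

open scoped RealInnerProductSpace
open Finset

theorem lemma2_bound
    (d K : ℕ) (hK : 1 ≤ K) (ι : Type*) [Fintype ι]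
    (f : ι → EuclideanSpace ℝ (Fin d) → ℝ) (μ L : ℝ) (hμ : 0 < μ) (hL : 0 < L)
    (γ : ι → ℝ) (hγ : ∀ n, 0 ≤ γ n) (hγsum : ∑ n, γ n = 1)
    (hdiff : ∀ n x, DifferentiableAt ℝ (f n) x)
    (hsc : ∀ n x y, f n x ≥ f n y + ⟪gradient (f n) y, x - y⟫
      + μ / 2 * ‖x - y‖ ^ 2)
    (hsmooth : ∀ n x y, f n x ≤ f n y + ⟪gradient (f n) y, x - y⟫
      + L / 2 * ‖x - y‖ ^ 2)
    (fstar : ι → ℝ) (hfstar : ∀ n x, fstar n ≤ f n x)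
    (η : ℕ → ℝ) (hη : ∀ k, 0 < η k) (hηK : ∀ k, η k < 1 / (2 * L * K))
    (w wstar : EuclideanSpace ℝ (Fin d))
    (wk : ℕ → EuclideanSpace ℝ (Fin d)) (hw0 : wk 0 = w) :
    -(∑ k ∈ range K, 2 * η k * (1 - 2 * L * K * η k)
        * ∑ n, γ n * (f n (wk k) - f n wstar)) ≤
      (∑ k ∈ range K, 2 * η k * (1 - 2 * L * K * η k) * (L * K * η k - 1)
        * ∑ n, γ n * (f n w - f n wstar))
      + (∑ k ∈ range K, 2 * L * K * (η k) ^ 2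
        * ∑ n, γ n * (f n wstar - fstar n))
      + (∑ k ∈ range K, (1 / (K : ℝ) - μ * η k) * ‖wk k - w‖ ^ 2) := by
  have hK1 : (1:ℝ) ≤ (K:ℝ) := by exact_mod_cast hK
  have hKr : (0:ℝ) < (K:ℝ) := by linarith
  -- step size facts
  have hs : ∀ k, 2 * L * (K:ℝ) * η k < 1 := by
    intro k
    have h := hηK k
    rw [lt_div_iff₀ (by positivity)] at h
    nlinarith [h]
  -- the key fact  μ * (K * η k) * ‖wk k - w‖^2 ≤ ‖wk k - w‖^2
  have hmu1 : ∀ k, μ * ((K:ℝ) * η k) * ‖wk k - w‖ ^ 2 ≤ ‖wk k - w‖ ^ 2 := by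
    rcases Nat.eq_zero_or_pos d with hd | hd
    · subst hd
      haveI : Subsingleton (EuclideanSpace ℝ (Fin 0)) :=
        ⟨fun a b => PiLp.ext (fun i => i.elim0)⟩
      intro k
      have hz : wk k - w = 0 := Subsingleton.elim _ _
      rw [hz]; simp
    · rcases isEmpty_or_nonempty ι with hι | hι
      · exfalso
        rw [Finset.univ_eq_empty, Finset.sum_empty] at hγsum
        norm_num at hγsum
      · obtain ⟨n₀⟩ := hι
        have hx : ‖(EuclideanSpace.single (⟨0, hd⟩ : Fin d) (1:ℝ)) - 0‖ = 1 := by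
          rw [sub_zero, EuclideanSpace.norm_single]; norm_num
        have h1 := hsc n₀ (EuclideanSpace.single (⟨0, hd⟩ : Fin d) (1:ℝ)) 0
        have h2 := hsmooth n₀ (EuclideanSpace.single (⟨0, hd⟩ : Fin d) (1:ℝ)) 0
        rw [hx] at h1 h2
        have hmuL : μ ≤ L := by nlinarith [h1, h2]
        intro k
        have hek : (0:ℝ) ≤ η k := (hη k).le
        have hc0 : (0:ℝ) ≤ (K:ℝ) * η k := mul_nonneg hKr.le hek
        have hD : (0:ℝ) ≤ ‖wk k - w‖ ^ 2 := by positivity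
        have hmc : μ * ((K:ℝ) * η k) ≤ 1 := by
          nlinarith [mul_nonneg (sub_nonneg.mpr hmuL) hc0, hs k]
        nlinarith [mul_nonneg (sub_nonneg.mpr hmc) hD]
  -- PL-type inequality from smoothness
  have hPL : ∀ n (x : EuclideanSpace ℝ (Fin d)),
      ‖gradient (f n) x‖ ^ 2 ≤ 2 * L * (f n x - fstar n) := by
    intro n x
    have h := hsmooth n (x - (1/L) • gradient (f n) x) x
    have h2 := hfstar n (x - (1/L) • gradient (f n) x)
    have e1 : x - (1/L) • gradient (f n) x - x = -((1/L) • gradient (f n) x) := by abel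
    rw [e1, inner_neg_right, real_inner_smul_right, real_inner_self_eq_norm_sq,
      norm_neg, norm_smul, Real.norm_eq_abs, abs_of_pos (by positivity : (0:ℝ) < 1/L)] at h
    have e3 : f n x + -(1/L * ‖gradient (f n) x‖ ^ 2)
        + L / 2 * (1/L * ‖gradient (f n) x‖) ^ 2
        = f n x - ‖gradient (f n) x‖ ^ 2 / (2*L) := by
      field_simp; ring
    rw [e3] at h
    have h3 : ‖gradient (f n) x‖ ^ 2 / (2*L) ≤ f n x - fstar n := by linarith [h2.trans h]
    have h4 := (div_le_iff₀ (by positivity : (0:ℝ) < 2*L)).mp h3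
    linarith [h4]
  -- multiply the goal by K to clear the 1/K
  rw [← mul_le_mul_iff_right₀ hKr]
  have perk : ∀ k ∈ range K,
      -((K:ℝ) * (2 * η k * (1 - 2 * L * K * η k)
          * ∑ n, γ n * (f n (wk k) - f n wstar))) ≤
        (K:ℝ) * (2 * η k * (1 - 2 * L * K * η k) * (L * K * η k - 1)
          * ∑ n, γ n * (f n w - f n wstar))
        + (K:ℝ) * (2 * L * K * (η k) ^ 2 * ∑ n, γ n * (f n wstar - fstar n))
        + (1 - μ * ((K:ℝ) * η k)) * ‖wk k - w‖ ^ 2 := by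
    intro k _
    have Qcore : ∀ n,
        -((K:ℝ) * (2 * η k * (1 - 2 * L * K * η k)) * (f n (wk k) - f n wstar)) ≤
          (K:ℝ) * (2 * η k * (1 - 2 * L * K * η k) * (L * K * η k - 1))
              * (f n w - f n wstar)
          + (K:ℝ) * (2 * L * K * (η k) ^ 2) * (f n wstar - fstar n)
          + (1 - μ * ((K:ℝ) * η k)) * ‖wk k - w‖ ^ 2 := by
      intro n
      have hek : (0:ℝ) ≤ η k := (hη k).le
      have hc0 : (0:ℝ) ≤ (K:ℝ) * η k := mul_nonneg hKr.le hek
      have hsc' : f n w + ⟪gradient (f n) w, wk k - w⟫ + μ / 2 * ‖wk k - w‖ ^ 2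
          ≤ f n (wk k) := hsc n (wk k) w
      have hexp : (0:ℝ) ≤ ((K:ℝ) * η k) ^ 2 * ‖gradient (f n) w‖ ^ 2
          + 2 * ((K:ℝ) * η k) * ⟪gradient (f n) w, wk k - w⟫ + ‖wk k - w‖ ^ 2 := by
        have hnn : (0:ℝ) ≤ ‖((K:ℝ) * η k) • gradient (f n) w + (wk k - w)‖ ^ 2 :=
          sq_nonneg _
        rw [norm_add_sq_real, real_inner_smul_left, norm_smul] at hnn
        have habs : (‖((K:ℝ) * η k)‖ * ‖gradient (f n) w‖) ^ 2
            = ((K:ℝ) * η k) ^ 2 * ‖gradient (f n) w‖ ^ 2 := by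
          rw [mul_pow, Real.norm_eq_abs, sq_abs]
        rw [habs] at hnn
        linarith [hnn]
      have hPLn := hPL n w
      have key2 : 2 * ((K:ℝ) * η k) * (f n w - f n (wk k)) ≤
          2 * L * ((K:ℝ) * η k) ^ 2 * (f n w - fstar n)
          + (1 - μ * ((K:ℝ) * η k)) * ‖wk k - w‖ ^ 2 := by
        linarith [mul_le_mul_of_nonneg_left hsc'
            (by linarith : (0:ℝ) ≤ 2 * ((K:ℝ) * η k)),
          mul_le_mul_of_nonneg_left hPLn (sq_nonneg ((K:ℝ) * η k)), hexp]
      have hfC : (0:ℝ) ≤ f n wstar - fstar n := by linarith [hfstar n wstar]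
      have hskey := mul_le_mul_of_nonneg_left key2
        (by linarith [hs k] : (0:ℝ) ≤ 1 - 2 * L * (K:ℝ) * η k)
      have t1 : (0:ℝ) ≤ (2 * L * ((K:ℝ) * η k)) * (2 * L * ((K:ℝ) * η k) ^ 2)
          * (f n wstar - fstar n) :=
        mul_nonneg (mul_nonneg (mul_nonneg (by positivity) hc0) (by positivity)) hfC
      have t2 : (0:ℝ) ≤ (2 * L * ((K:ℝ) * η k))
          * ((1 - μ * ((K:ℝ) * η k)) * ‖wk k - w‖ ^ 2) :=
        mul_nonneg (mul_nonneg (by positivity) hc0) (by linarith [hmu1 k])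
      linarith [hskey, t1, t2]
    have hsum := Finset.sum_le_sum
      (fun n (_ : n ∈ Finset.univ) => mul_le_mul_of_nonneg_left (Qcore n) (hγ n))
    have eL : -((K:ℝ) * (2 * η k * (1 - 2 * L * K * η k)
        * ∑ n, γ n * (f n (wk k) - f n wstar)))
        = ∑ n, γ n * (-((K:ℝ) * (2 * η k * (1 - 2 * L * K * η k))
            * (f n (wk k) - f n wstar))) := by
      rw [Finset.mul_sum, Finset.mul_sum, ← Finset.sum_neg_distrib]
      exact Finset.sum_congr rfl fun n _ => by ring
    have eR : (∑ n, γ n * ((K:ℝ) * (2 * η k * (1 - 2 * L * K * η k) * (L * K * η k - 1))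
              * (f n w - f n wstar)
          + (K:ℝ) * (2 * L * K * (η k) ^ 2) * (f n wstar - fstar n)
          + (1 - μ * ((K:ℝ) * η k)) * ‖wk k - w‖ ^ 2))
        = (K:ℝ) * (2 * η k * (1 - 2 * L * K * η k) * (L * K * η k - 1)
            * ∑ n, γ n * (f n w - f n wstar))
          + (K:ℝ) * (2 * L * K * (η k) ^ 2 * ∑ n, γ n * (f n wstar - fstar n))
          + (1 - μ * ((K:ℝ) * η k)) * ‖wk k - w‖ ^ 2 := by
      calc (∑ n, γ n * ((K:ℝ) * (2 * η k * (1 - 2 * L * K * η k) * (L * K * η k - 1))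
              * (f n w - f n wstar)
            + (K:ℝ) * (2 * L * K * (η k) ^ 2) * (f n wstar - fstar n)
            + (1 - μ * ((K:ℝ) * η k)) * ‖wk k - w‖ ^ 2))
          = ∑ n, (((K:ℝ) * (2 * η k * (1 - 2 * L * K * η k) * (L * K * η k - 1)))
                * (γ n * (f n w - f n wstar))
            + ((K:ℝ) * (2 * L * K * (η k) ^ 2)) * (γ n * (f n wstar - fstar n))
            + ((1 - μ * ((K:ℝ) * η k)) * ‖wk k - w‖ ^ 2) * γ n) :=
            Finset.sum_congr rfl fun n _ => by ring
        _ = ((K:ℝ) * (2 * η k * (1 - 2 * L * K * η k) * (L * K * η k - 1)))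
              * ∑ n, γ n * (f n w - f n wstar)
            + ((K:ℝ) * (2 * L * K * (η k) ^ 2)) * ∑ n, γ n * (f n wstar - fstar n)
            + ((1 - μ * ((K:ℝ) * η k)) * ‖wk k - w‖ ^ 2) * ∑ n, γ n := by
            rw [Finset.sum_add_distrib, Finset.sum_add_distrib,
              ← Finset.mul_sum, ← Finset.mul_sum, ← Finset.mul_sum]
        _ = _ := by rw [hγsum]; ring
    rw [eL]
    exact hsum.trans (le_of_eq eR)
  calc (K:ℝ) * -(∑ k ∈ range K, 2 * η k * (1 - 2 * L * K * η k)
        * ∑ n, γ n * (f n (wk k) - f n wstar))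
      = ∑ k ∈ range K, -((K:ℝ) * (2 * η k * (1 - 2 * L * K * η k)
          * ∑ n, γ n * (f n (wk k) - f n wstar))) := by
        rw [mul_neg, Finset.mul_sum, ← Finset.sum_neg_distrib]
    _ ≤ ∑ k ∈ range K, ((K:ℝ) * (2 * η k * (1 - 2 * L * K * η k) * (L * K * η k - 1)
          * ∑ n, γ n * (f n w - f n wstar))
        + (K:ℝ) * (2 * L * K * (η k) ^ 2 * ∑ n, γ n * (f n wstar - fstar n))
        + (1 - μ * ((K:ℝ) * η k)) * ‖wk k - w‖ ^ 2) := Finset.sum_le_sum perk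
    _ = (K:ℝ) * ((∑ k ∈ range K, 2 * η k * (1 - 2 * L * K * η k) * (L * K * η k - 1)
          * ∑ n, γ n * (f n w - f n wstar))
        + (∑ k ∈ range K, 2 * L * K * (η k) ^ 2
          * ∑ n, γ n * (f n wstar - fstar n))
        + (∑ k ∈ range K, (1 / (K : ℝ) - μ * η k) * ‖wk k - w‖ ^ 2)) := by
        rw [Finset.sum_add_distrib, Finset.sum_add_distrib, mul_add, mul_add,
          Finset.mul_sum, Finset.mul_sum, Finset.mul_sum]
        congr 1
        refine Finset.sum_congr rfl fun k _ => ?_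
        rw [show (1/(K:ℝ) - μ * η k) = (1 - μ * ((K:ℝ) * η k))/(K:ℝ) from by
          field_simp]
        field_simp
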